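/- Given W*-correspondences E_s, E_t over M and co-isometric bimodule maps U_{s,t} : E_s ⊗ E_t → E_{st} and U_{t,s} : E_t ⊗ E_s → E_{st}, the block operator f_{s,t} on (E_s ⊗ E_t) ⊕ (E_t ⊗ E_s) ⊕ R given matricially by [[U_{t,s}* U_{s,t}, 1 − U_{t,s}* U_{t,s}, 0], [1 − U_{s,t}* U_{s,t}, U_{s,t}* U_{t,s}, 0], [0, 0, 1]] is a unitary bimodule map, and f_{s,t}* = f_{t,s}. -/

import Mathlib

open ContinuousLinearMap

/-- The Hilbert-sum `(X ⊕ Y) ⊕ Z` with the ℓ²-inner product. -/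
abbrev Sum3 (X Y Z : Type*) := WithLp 2 (WithLp 2 (X × Y) × Z)

/-- The element `(x, y, z)` of the Hilbert sum. -/
noncomputable def mk3 {X Y Z : Type*} (x : X) (y : Y) (z : Z) : Sum3 X Y Z :=
  (WithLp.equiv 2 (WithLp 2 (X × Y) × Z)).symm ((WithLp.equiv 2 (X × Y)).symm (x, y), z)

noncomputable def pr1 {X Y Z : Type*} (v : Sum3 X Y Z) : X :=
  ((WithLp.equiv 2 (X × Y)) ((WithLp.equiv 2 (WithLp 2 (X × Y) × Z)) v).1).1

noncomputable def pr2 {X Y Z : Type*} (v : Sum3 X Y Z) : Y :=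
  ((WithLp.equiv 2 (X × Y)) ((WithLp.equiv 2 (WithLp 2 (X × Y) × Z)) v).1).2

noncomputable def pr3 {X Y Z : Type*} (v : Sum3 X Y Z) : Z :=
  ((WithLp.equiv 2 (WithLp 2 (X × Y) × Z)) v).2

section aux
variable {X Y Z : Type*}

lemma mk3_eta (v : Sum3 X Y Z) : mk3 (pr1 v) (pr2 v) (pr3 v) = v := rfl

@[simp] lemma pr1_mk3 (x : X) (y : Y) (z : Z) : pr1 (mk3 x y z) = x := rfl
@[simp] lemma pr2_mk3 (x : X) (y : Y) (z : Z) : pr2 (mk3 x y z) = y := rfl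
@[simp] lemma pr3_mk3 (x : X) (y : Y) (z : Z) : pr3 (mk3 x y z) = z := rfl

lemma inner_mk3 [NormedAddCommGroup X] [InnerProductSpace ℂ X]
    [NormedAddCommGroup Y] [InnerProductSpace ℂ Y]
    [NormedAddCommGroup Z] [InnerProductSpace ℂ Z]
    (x x' : X) (y y' : Y) (z z' : Z) :
    (inner ℂ (mk3 x y z) (mk3 x' y' z') : ℂ) =
      inner ℂ x x' + inner ℂ y y' + inner ℂ z z' := by
  simp [mk3, WithLp.prod_inner_apply]

end aux

/-- The matricial flip operator built from two co-isometries `U : A → C`, `V : B → C`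
(think `A = E_s ⊗ E_t`, `B = E_t ⊗ E_s`, `C = E_{st}`, `R` the common remainder):
the block operator `[[V*U, 1 − V*V, 0], [1 − U*U, U*V, 0], [0,0,1]]` from
`A ⊕ B ⊕ R` to `B ⊕ A ⊕ R` is a unitary bimodule map (it intertwines any families of
module actions intertwined by `U` and `V`), and its adjoint is the corresponding flip
with the roles of `s` and `t` reversed. -/
theorem stmt13 {A B R C M : Type*}
    [NormedAddCommGroup A] [InnerProductSpace ℂ A] [CompleteSpace A]
    [NormedAddCommGroup B] [InnerProductSpace ℂ B] [CompleteSpace B]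
    [NormedAddCommGroup R] [InnerProductSpace ℂ R] [CompleteSpace R]
    [NormedAddCommGroup C] [InnerProductSpace ℂ C] [CompleteSpace C]
    (U : A →L[ℂ] C) (V : B →L[ℂ] C)
    (hU : U ∘L adjoint U = 1) (hV : V ∘L adjoint V = 1)
    (LA : M → A →L[ℂ] A) (LB : M → B →L[ℂ] B) (LR : M → R →L[ℂ] R) (LC : M → C →L[ℂ] C)
    (hUL : ∀ a, U ∘L LA a = LC a ∘L U) (hVL : ∀ a, V ∘L LB a = LC a ∘L V)
    (hUL' : ∀ a, adjoint U ∘L LC a = LA a ∘L adjoint U)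
    (hVL' : ∀ a, adjoint V ∘L LC a = LB a ∘L adjoint V)
    (f : Sum3 A B R →L[ℂ] Sum3 B A R) (f' : Sum3 B A R →L[ℂ] Sum3 A B R)
    (hf : ∀ (x : A) (y : B) (z : R),
      f (mk3 x y z) =
        mk3 (adjoint V (U x) + (y - adjoint V (V y)))
            ((x - adjoint U (U x)) + adjoint U (V y)) z)
    (hf' : ∀ (y : B) (x : A) (z : R),
      f' (mk3 y x z) =
        mk3 (adjoint U (V y) + (x - adjoint U (U x)))
            ((y - adjoint V (V y)) + adjoint V (U x)) z) :
    adjoint f = f' ∧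
    adjoint f ∘L f = 1 ∧ f ∘L adjoint f = 1 ∧
    (∀ (a : M) (x : A) (y : B) (z : R),
      f (mk3 (LA a x) (LB a y) (LR a z)) =
        mk3 (LB a (pr1 (f (mk3 x y z)))) (LA a (pr2 (f (mk3 x y z))))
            (LR a (pr3 (f (mk3 x y z))))) := by
  have hUa : ∀ c : C, U (adjoint U c) = c := fun c =>
    congrArg (fun (T : C →L[ℂ] C) => T c) hU
  have hVa : ∀ c : C, V (adjoint V c) = c := fun c =>
    congrArg (fun (T : C →L[ℂ] C) => T c) hV
  have hadj : adjoint f = f' := by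
    refine ((eq_adjoint_iff f' f).mpr ?_).symm
    intro v w
    rw [← mk3_eta v, ← mk3_eta w]
    set b := pr1 v; set a := pr2 v; set r := pr3 v
    set x := pr1 w; set y := pr2 w; set z := pr3 w
    rw [hf, hf', inner_mk3, inner_mk3]
    simp only [inner_add_left, inner_add_right, inner_sub_left, inner_sub_right,
      adjoint_inner_left, adjoint_inner_right]
    ring
  have hff : ∀ (x : A) (y : B) (z : R), f' (f (mk3 x y z)) = mk3 x y z := by
    intro x y z
    rw [hf, hf']
    congr 1
    · simp only [map_add, map_sub, hUa, hVa]
      abel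
    · simp only [map_add, map_sub, hUa, hVa]
      abel
  have hff' : ∀ (y : B) (x : A) (z : R), f (f' (mk3 y x z)) = mk3 y x z := by
    intro y x z
    rw [hf', hf]
    congr 1
    · simp only [map_add, map_sub, hUa, hVa]
      abel
    · simp only [map_add, map_sub, hUa, hVa]
      abel
  refine ⟨hadj, ?_, ?_, ?_⟩
  · rw [hadj]; ext v
    simpa [mk3_eta] using hff (pr1 v) (pr2 v) (pr3 v)
  · rw [hadj]; ext v
    simpa [mk3_eta] using hff' (pr1 v) (pr2 v) (pr3 v)
  · intro a x y z
    rw [hf, hf x y z]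
    have h1 : ∀ c : C, adjoint U (LC a c) = LA a (adjoint U c) := fun c =>
      congrArg (fun (T : C →L[ℂ] A) => T c) (hUL' a)
    have h2 : ∀ c : C, adjoint V (LC a c) = LB a (adjoint V c) := fun c =>
      congrArg (fun (T : C →L[ℂ] B) => T c) (hVL' a)
    have h3 : ∀ x : A, U (LA a x) = LC a (U x) := fun x =>
      congrArg (fun (T : A →L[ℂ] C) => T x) (hUL a)
    have h4 : ∀ y : B, V (LB a y) = LC a (V y) := fun y =>
      congrArg (fun (T : B →L[ℂ] C) => T y) (hVL a)
    simp only [pr1_mk3, pr2_mk3, pr3_mk3, h3, h4, h1, h2, map_add, map_sub]
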